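/- Let f : ℝ^l → ℝ^n be continuous on a neighborhood of z̄ and linearly open around z̄ with modulus κ > 0, and let g : ℝ^l → ℝ^n be Lipschitz continuous on a neighborhood of z̄ with Lipschitz constant ν satisfying 0 ≤ ν < κ. Then for every κ' with 0 < κ' < κ − ν the sum f + g is linearly open around z̄ with modulus κ'. In particular, if f : ℝ^n × ℝ^m → ℝ^n is C¹ near (0,0) and linearly open around (0,0) with some modulus exceeding κ > 0, then for each ν ∈ [0, κ) the map f_ν(x,u) := f(x,u) − νx is linearly open around (0,0) with some modulus exceeding κ − ν. -/

import Mathlib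

open Metric Set Filter

noncomputable section

/-- `ℝ^n` with the Euclidean norm. -/
abbrev Euc (n : ℕ) : Type := EuclideanSpace ℝ (Fin n)

/-- `ℝ^n × ℝ^m` identified with `ℝ^{n+m}` with its Euclidean norm. -/
abbrev EucProd (n m : ℕ) : Type := WithLp 2 (Euc n × Euc m)

/-- Build a point of `ℝ^n × ℝ^m`. -/
def mkProd {n m : ℕ} (x : Euc n) (u : Euc m) : EucProd n m :=
  (WithLp.equiv 2 (Euc n × Euc m)).symm (x, u)

def pFst {n m : ℕ} (p : EucProd n m) : Euc n := ((WithLp.equiv 2 (Euc n × Euc m)) p).1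

def pSnd {n m : ℕ} (p : EucProd n m) : Euc m := ((WithLp.equiv 2 (Euc n × Euc m)) p).2

/-- View a plain vector as a point of Euclidean space. -/
def vecE {n : ℕ} (v : Fin n → ℝ) : Euc n := WithLp.toLp 2 v

/-- `f` is linearly open around `z` with modulus `κ > 0`: on some neighborhood `U` of `z`,
`B_{κ r}(f w) ⊆ f (B_r w)` whenever `w ∈ U`, `r > 0`, and `B_r w ⊆ U`. -/
def LinOpenWith {E F : Type*} [NormedAddCommGroup E] [NormedAddCommGroup F]
    (f : E → F) (z : E) (κ : ℝ) : Prop :=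
  0 < κ ∧ ∃ U ∈ nhds z, ∀ w ∈ U, ∀ r : ℝ, 0 < r → closedBall w r ⊆ U →
      closedBall (f w) (κ * r) ⊆ f '' closedBall w r

/-- `f` is linearly open around `z` (with some modulus `κ > 0`). -/
def LinOpenAround {E F : Type*} [NormedAddCommGroup E] [NormedAddCommGroup F]
    (f : E → F) (z : E) : Prop :=
  ∃ κ : ℝ, LinOpenWith f z κ

/-- `f` is `C¹` on an open neighborhood of `z`. -/
def C1Near {E F : Type*} [NormedAddCommGroup E] [NormedSpace ℝ E]
    [NormedAddCommGroup F] [NormedSpace ℝ F] (f : E → F) (z : E) : Prop :=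
  ∃ U : Set E, IsOpen U ∧ z ∈ U ∧ ContDiffOn ℝ 1 f U

/-- The partial Jacobian matrix `A = ∂f/∂x(0,0)`. -/
def xJac {n m : ℕ} (f : EucProd n m → Euc n) : Matrix (Fin n) (Fin n) ℝ :=
  Matrix.of fun i j => fderiv ℝ f 0 (mkProd (EuclideanSpace.single j 1) 0) i

/-- The partial Jacobian matrix `B = ∂f/∂u(0,0)`. -/
def uJac {n m : ℕ} (f : EucProd n m → Euc n) : Matrix (Fin n) (Fin m) ℝ :=
  Matrix.of fun i j => fderiv ℝ f 0 (mkProd 0 (EuclideanSpace.single j 1)) i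

/-- The set of complex eigenvalues of a real matrix. -/
def specC {n : ℕ} (A : Matrix (Fin n) (Fin n) ℝ) : Set ℂ :=
  spectrum ℂ (A.map (Complex.ofReal : ℝ → ℂ))

/-- Local exponential stabilizability of `ẋ = f(x,u)` by stationary feedback laws
satisfying the regularity predicate `P`. -/
def ExpStabWith {n m : ℕ} (f : EucProd n m → Euc n) (P : (Euc n → Euc m) → Prop) : Prop :=
  ∃ u : Euc n → Euc m, P u ∧ u 0 = 0 ∧
    ∃ α : ℝ, 0 < α ∧ ∃ M : ℝ, 0 < M ∧ ∃ δ : ℝ, 0 < δ ∧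
      ∀ x₀ : Euc n, ‖x₀‖ < δ →
        ∃ x : ℝ → Euc n,
          (x 0 = x₀ ∧
            ∀ t ∈ Ici (0:ℝ), HasDerivWithinAt x (f (mkProd (x t) (u (x t)))) (Ici 0) t) ∧
          (∀ y : ℝ → Euc n,
            (y 0 = x₀ ∧
              ∀ t ∈ Ici (0:ℝ), HasDerivWithinAt y (f (mkProd (y t) (u (y t)))) (Ici 0) t) →
            ∀ t ∈ Ici (0:ℝ), y t = x t) ∧
          ∀ t ∈ Ici (0:ℝ), ‖x t‖ ≤ M * Real.exp (-α * t) * ‖x₀‖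

/-- Local exponential stabilizability by continuous stationary feedback laws. -/
def ExpStabCont {n m : ℕ} (f : EucProd n m → Euc n) : Prop :=
  ExpStabWith f Continuous

/-- Local exponential stabilizability by `C¹` stationary feedback laws. -/
def ExpStabC1 {n m : ℕ} (f : EucProd n m → Euc n) : Prop :=
  ExpStabWith f (fun u => ContDiff ℝ 1 u)

/-- Local asymptotic stabilizability of `ẋ = f(x,u)` by `C¹` stationary feedback laws. -/
def AsympStabC1 {n m : ℕ} (f : EucProd n m → Euc n) : Prop :=
  ∃ u : Euc n → Euc m, ContDiff ℝ 1 u ∧ u 0 = 0 ∧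
    ((∀ ε : ℝ, 0 < ε → ∃ δ : ℝ, 0 < δ ∧ ∀ x : ℝ → Euc n, ‖x 0‖ < δ →
        (∀ t ∈ Ici (0:ℝ), HasDerivWithinAt x (f (mkProd (x t) (u (x t)))) (Ici 0) t) →
        ∀ t ∈ Ici (0:ℝ), ‖x t‖ < ε) ∧
      ∃ δ₀ : ℝ, 0 < δ₀ ∧ ∀ x : ℝ → Euc n, ‖x 0‖ < δ₀ →
        (∀ t ∈ Ici (0:ℝ), HasDerivWithinAt x (f (mkProd (x t) (u (x t)))) (Ici 0) t) →
        Tendsto x atTop (nhds 0))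

/-- Local asymptotic stabilizability of the discrete-time system `x_{k+1} = f(x_k,u_k)`
by continuous stationary feedback laws. -/
def DiscAsympStabCont {n m : ℕ} (f : EucProd n m → Euc n) : Prop :=
  ∃ u : Euc n → Euc m, Continuous u ∧ u 0 = 0 ∧
    ((∀ ε : ℝ, 0 < ε → ∃ δ : ℝ, 0 < δ ∧ ∀ x₀ : Euc n, ‖x₀‖ < δ →
        ∀ k : ℕ, ‖(fun x => f (mkProd x (u x)))^[k] x₀‖ < ε) ∧
      ∃ δ₀ : ℝ, 0 < δ₀ ∧ ∀ x₀ : Euc n, ‖x₀‖ < δ₀ →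
        Tendsto (fun k => (fun x => f (mkProd x (u x)))^[k] x₀) atTop (nhds 0))


private lemma sum_linOpen {E F : Type*} [NormedAddCommGroup E] [NormedAddCommGroup F]
    [CompleteSpace E] (f g : E → F) (zbar : E) (κ ν κ' : ℝ)
    (hfc : ∃ U ∈ nhds zbar, ContinuousOn f U)
    (hfo : LinOpenWith f zbar κ)
    (hν0 : 0 ≤ ν) (hνκ : ν < κ)
    (hg : ∃ U ∈ nhds zbar, LipschitzOnWith (Real.toNNReal ν) g U)
    (hκ'0 : 0 < κ') (hκ'κ : κ' < κ - ν) :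
    LinOpenWith (fun w => f w + g w) zbar κ' := by
  classical
  obtain ⟨Uc, hUc, hfcont⟩ := hfc
  obtain ⟨hκ, Uf, hUf, hopen⟩ := hfo
  obtain ⟨Ug, hUg, hlip⟩ := hg
  have hκν : 0 < κ - ν := by linarith
  set c : ℝ := κ / (κ - ν) with hc_def
  have hcκ : c * (κ - ν) = κ := div_mul_cancel₀ _ (ne_of_gt hκν)
  have hc1 : 1 ≤ c := (one_le_div hκν).mpr (by linarith)
  have hcpos : 0 < c := lt_of_lt_of_le one_pos hc1
  refine ⟨hκ'0, Uf ∩ Uc ∩ Ug, inter_mem (inter_mem hUf hUc) hUg, ?_⟩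
  intro w hw r hr hball y hy
  -- distance-to-solution function
  set d : E → ℝ := fun z => dist (y - g z) (f z) with hd_def
  have hd0 : ∀ z, 0 ≤ d z := fun z => dist_nonneg
  have hdw : d w ≤ κ' * r := by
    have : d w = dist y (f w + g w) := by
      simp only [hd_def, dist_eq_norm]
      congr 1; abel
    rw [this]; exact mem_closedBall.mp hy
  -- the key step: solve f z' = y - g z near z
  have key : ∀ z : E, z ∈ closedBall w r → closedBall z (d z / κ) ⊆ closedBall w r →
      ∃ z', dist z' z ≤ d z / κ ∧ f z' = y - g z := by
    intro z hz hsub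
    rcases eq_or_lt_of_le (hd0 z) with h0 | hpos
    · refine ⟨z, by simp [← h0], ?_⟩
      exact (dist_eq_zero.mp h0.symm).symm
    · have hzUf : z ∈ Uf := ((hball hz).1).1
      have hsubUf : closedBall z (d z / κ) ⊆ Uf :=
        hsub.trans (fun x hx => ((hball hx).1).1)
      have hmem : y - g z ∈ closedBall (f z) (κ * (d z / κ)) := by
        rw [mem_closedBall]
        have h2 : κ * (d z / κ) = d z := by field_simp
        rw [h2]
      obtain ⟨z', hz'mem, hz'eq⟩ := hopen z hzUf (d z / κ) (div_pos hpos hκ) hsubUf hmem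
      exact ⟨z', mem_closedBall.mp hz'mem, hz'eq⟩
  -- the recursively defined sequence
  set zs : ℕ → E := fun k => Nat.rec w (fun _ z =>
    if h : ∃ z', dist z' z ≤ d z / κ ∧ f z' = y - g z then h.choose else z) k with hzs_def
  have hzs0 : zs 0 = w := rfl
  -- a global bound
  have hid : κ + c * ν = c * κ := by linarith [hcκ]
  have hcdw : c * d w ≤ κ * r := by
    calc c * d w ≤ c * (κ' * r) := mul_le_mul_of_nonneg_left hdw hcpos.le
      _ ≤ c * ((κ - ν) * r) :=
          mul_le_mul_of_nonneg_left (mul_le_mul_of_nonneg_right hκ'κ.le hr.le) hcpos.le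
      _ = (c * (κ - ν)) * r := by ring
      _ = κ * r := by rw [hcκ]
  -- from the invariant we get membership and ball containment
  have memball : ∀ z : E, dist z w * κ + c * d z ≤ c * d w → z ∈ closedBall w r := by
    intro z hinv
    rw [mem_closedBall]
    nlinarith [mul_nonneg hcpos.le (hd0 z), hcdw]
  have subball : ∀ z : E, dist z w * κ + c * d z ≤ c * d w →
      closedBall z (d z / κ) ⊆ closedBall w r := by
    intro z hinv x hx
    rw [mem_closedBall] at hx ⊢
    have htri := dist_triangle x z w
    have hxz : dist x z * κ ≤ d z := by
      have := mul_le_mul_of_nonneg_right hx hκ.le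
      rwa [div_mul_cancel₀ _ (ne_of_gt hκ)] at this
    nlinarith [mul_le_mul_of_nonneg_right htri hκ.le,
      mul_nonneg (sub_nonneg.mpr hc1) (hd0 z), hcdw]
  -- successor facts given the invariant
  have succ_facts : ∀ k : ℕ, dist (zs k) w * κ + c * d (zs k) ≤ c * d w →
      dist (zs (k+1)) (zs k) ≤ d (zs k) / κ ∧ f (zs (k+1)) = y - g (zs k) ∧
        d (zs (k+1)) ≤ ν * dist (zs (k+1)) (zs k) := by
    intro k hinv
    have hmem := memball _ hinv
    have hsub := subball _ hinv
    have hex := key (zs k) hmem hsub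
    have hzs : zs (k+1) = hex.choose := dif_pos hex
    have h1 : dist (zs (k+1)) (zs k) ≤ d (zs k) / κ := by
      rw [hzs]; exact hex.choose_spec.1
    have h2 : f (zs (k+1)) = y - g (zs k) := by
      rw [hzs]; exact hex.choose_spec.2
    refine ⟨h1, h2, ?_⟩
    have hz'mem : zs (k+1) ∈ closedBall w r := hsub (mem_closedBall.mpr h1)
    have hz'Ug : zs (k+1) ∈ Ug := ((hball hz'mem)).2
    have hzUg : zs k ∈ Ug := ((hball hmem)).2
    have hgl : dist (g (zs (k+1))) (g (zs k)) ≤ ν * dist (zs (k+1)) (zs k) := by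
      have := hlip.dist_le_mul _ hz'Ug _ hzUg
      rwa [Real.coe_toNNReal _ hν0] at this
    calc d (zs (k+1)) = dist (y - g (zs (k+1))) (y - g (zs k)) := by
          show dist (y - g (zs (k+1))) (f (zs (k+1))) = _
          rw [h2]
      _ = dist (g (zs (k+1))) (g (zs k))  := by
          have hrw : y - g (zs (k+1)) - (y - g (zs k)) = g (zs k) - g (zs (k+1)) := by abel
          rw [dist_eq_norm, dist_eq_norm, hrw, norm_sub_rev]
      _ ≤ ν * dist (zs (k+1)) (zs k) := hgl
  -- the main invariant, by induction
  have main : ∀ k : ℕ, dist (zs k) w * κ + c * d (zs k) ≤ c * d w ∧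
      d (zs k) ≤ (ν / κ) ^ k * d w := by
    intro k
    induction k with
    | zero => simp [hzs0, dist_self]
    | succ k ih =>
      obtain ⟨hinv, hgeom⟩ := ih
      obtain ⟨h1, h2, h3⟩ := succ_facts k hinv
      have htri := dist_triangle (zs (k+1)) (zs k) w
      have hdistnn : (0:ℝ) ≤ dist (zs (k+1)) (zs k) := dist_nonneg
      have hdk : dist (zs (k+1)) (zs k) * κ ≤ d (zs k) := by
        have := mul_le_mul_of_nonneg_right h1 hκ.le
        rwa [div_mul_cancel₀ _ (ne_of_gt hκ)] at this
      constructor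
      · -- invariant preserved
        calc dist (zs (k+1)) w * κ + c * d (zs (k+1))
            ≤ (dist (zs (k+1)) (zs k) + dist (zs k) w) * κ
                + c * (ν * dist (zs (k+1)) (zs k)) := by
              have e1 := mul_le_mul_of_nonneg_right htri hκ.le
              have e2 := mul_le_mul_of_nonneg_left h3 hcpos.le
              linarith
          _ = dist (zs k) w * κ + (κ + c * ν) * dist (zs (k+1)) (zs k) := by ring
          _ = dist (zs k) w * κ + c * (dist (zs (k+1)) (zs k) * κ) := by rw [hid]; ring
          _ ≤ dist (zs k) w * κ + c * d (zs k) := by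
              have := mul_le_mul_of_nonneg_left hdk hcpos.le
              linarith
          _ ≤ c * d w := hinv
      · -- geometric decay
        have : d (zs (k+1)) ≤ (ν / κ) * d (zs k) := by
          calc d (zs (k+1)) ≤ ν * dist (zs (k+1)) (zs k) := h3
            _ ≤ ν * (d (zs k) / κ) := mul_le_mul_of_nonneg_left h1 hν0
            _ = (ν / κ) * d (zs k) := by ring
        calc d (zs (k+1)) ≤ (ν / κ) * d (zs k) := this
          _ ≤ (ν / κ) * ((ν / κ) ^ k * d w) :=
              mul_le_mul_of_nonneg_left hgeom (div_nonneg hν0 hκ.le)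
          _ = (ν / κ) ^ (k+1) * d w := by ring
  -- Cauchy sequence
  have hq1 : ν / κ < 1 := (div_lt_one hκ).mpr (by linarith)
  have hcau : CauchySeq zs := by
    apply cauchySeq_of_le_geometric (ν / κ) (d w / κ) hq1
    intro k
    obtain ⟨hinv, hgeom⟩ := main k
    obtain ⟨h1, _, _⟩ := succ_facts k hinv
    calc dist (zs k) (zs (k+1)) = dist (zs (k+1)) (zs k) := dist_comm _ _
      _ ≤ d (zs k) / κ := h1
      _ ≤ ((ν / κ) ^ k * d w) / κ := (div_le_div_iff_of_pos_right hκ).mpr hgeom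
      _ = d w / κ * (ν / κ) ^ k := by ring
  obtain ⟨zlim, hlim⟩ := cauchySeq_tendsto_of_complete hcau
  have hmemall : ∀ k, zs k ∈ closedBall w r := fun k => memball _ (main k).1
  have hzlimmem : zlim ∈ closedBall w r :=
    isClosed_closedBall.mem_of_tendsto hlim (Filter.Eventually.of_forall hmemall)
  refine ⟨zlim, hzlimmem, ?_⟩
  -- pass to the limit in f (zs (k+1)) = y - g (zs k)
  have hzsU : ∀ k, zs k ∈ Uf ∩ Uc ∩ Ug := fun k => hball (hmemall k)
  have hzlimU : zlim ∈ Uf ∩ Uc ∩ Ug := hball hzlimmem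
  have htendUc : Tendsto zs atTop (nhdsWithin zlim Uc) :=
    tendsto_nhdsWithin_iff.mpr ⟨hlim, Filter.Eventually.of_forall (fun k => (hzsU k).1.2)⟩
  have htendUg : Tendsto zs atTop (nhdsWithin zlim Ug) :=
    tendsto_nhdsWithin_iff.mpr ⟨hlim, Filter.Eventually.of_forall (fun k => (hzsU k).2)⟩
  have hfl : Tendsto (fun k => f (zs k)) atTop (nhds (f zlim)) :=
    (hfcont zlim hzlimU.1.2).tendsto.comp htendUc
  have hgl : Tendsto (fun k => g (zs k)) atTop (nhds (g zlim)) :=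
    ((hlip.continuousOn) zlim hzlimU.2).tendsto.comp htendUg
  have heqk : ∀ k, f (zs (k+1)) = y - g (zs k) := fun k => (succ_facts k (main k).1).2.1
  have hLHS : Tendsto (fun k => f (zs (k+1))) atTop (nhds (f zlim)) :=
    hfl.comp (tendsto_add_atTop_nat 1)
  have hRHS : Tendsto (fun k => y - g (zs k)) atTop (nhds (y - g zlim)) :=
    tendsto_const_nhds.sub hgl
  have hfe : f zlim = y - g zlim := by
    apply tendsto_nhds_unique hLHS
    simpa only [heqk] using hRHS
  show f zlim + g zlim = y
  rw [hfe]; abel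

/-- stability of linear openness under Lipschitzian perturbations; in particular,
for a `C¹` map `f` linearly open around `(0,0)` with modulus exceeding `κ`, the map
`f_ν(x,u) = f(x,u) - ν x` is linearly open around `(0,0)` with modulus exceeding `κ - ν`. -/
theorem linear_openness_lipschitz_perturbation {l n : ℕ}
    (f g : Euc l → Euc n) (zbar : Euc l) (κ ν : ℝ)
    (hfc : ∃ U ∈ nhds zbar, ContinuousOn f U)
    (hfo : LinOpenWith f zbar κ)
    (hν0 : 0 ≤ ν) (hνκ : ν < κ)
    (hg : ∃ U ∈ nhds zbar, LipschitzOnWith (Real.toNNReal ν) g U) :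
    (∀ κ' : ℝ, 0 < κ' → κ' < κ - ν → LinOpenWith (fun w => f w + g w) zbar κ') ∧
    (∀ (n' m' : ℕ) (F : EucProd n' m' → Euc n') (κ₀ : ℝ), 0 < κ₀ →
      C1Near F 0 → (∃ κ₁ > κ₀, LinOpenWith F 0 κ₁) →
      ∀ ν' : ℝ, 0 ≤ ν' → ν' < κ₀ →
        ∃ κ₂ > κ₀ - ν', LinOpenWith (fun p => F p - ν' • pFst p) 0 κ₂) := by
  constructor
  · intro κ' h1 h2
    exact sum_linOpen f g zbar κ ν κ' hfc hfo hν0 hνκ hg h1 h2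
  · rintro n' m' F κ₀ hκ₀ ⟨V, hVopen, hV0, hVc1⟩ ⟨κ₁, hκ₁, hFopen⟩ ν' hν'0 hν'κ₀
    set G : EucProd n' m' → Euc n' := fun p => (-ν') • pFst p with hG_def
    have hGlip : LipschitzWith (Real.toNNReal ν') G := by
      apply LipschitzWith.of_dist_le_mul
      intro p q
      rw [Real.coe_toNNReal _ hν'0, dist_eq_norm, dist_eq_norm]
      have hsub : G p - G q = (-ν') • (pFst p - pFst q) := by
        rw [smul_sub]
      rw [hsub, norm_smul, norm_neg, Real.norm_eq_abs, abs_of_nonneg hν'0]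
      apply mul_le_mul_of_nonneg_left ?_ hν'0
      have hfst : pFst p - pFst q = pFst (p - q) := rfl
      rw [hfst]
      have hn := WithLp.prod_norm_eq_of_L2 (p - q)
      have h1 : ‖pFst (p - q)‖ = Real.sqrt (‖pFst (p - q)‖ ^ 2) :=
        (Real.sqrt_sq (norm_nonneg _)).symm
      rw [hn, h1]
      apply Real.sqrt_le_sqrt
      have := sq_nonneg ‖(p - q).snd‖
      have hfsteq : pFst (p - q) = (p - q).fst := rfl
      rw [hfsteq]; linarith
    have hGlipOn : LipschitzOnWith (Real.toNNReal ν') G univ := lipschitzOnWith_univ.mpr hGlip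
    set κ₂ : ℝ := (κ₀ + κ₁) / 2 - ν' with hκ₂_def
    refine ⟨κ₂, by simp only [hκ₂_def]; linarith, ?_⟩
    have hmain := sum_linOpen F G 0 κ₁ ν' κ₂
      ⟨V, hVopen.mem_nhds hV0, hVc1.continuousOn⟩ hFopen hν'0 (by linarith)
      ⟨univ, Filter.univ_mem, hGlipOn⟩
      (by simp only [hκ₂_def]; linarith) (by simp only [hκ₂_def]; linarith)
    have heq : (fun p => F p - ν' • pFst p) = (fun p => F p + G p) := by
      funext p
      simp only [hG_def, neg_smul, sub_eq_add_neg]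
    rw [heq]
    exact hmain
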